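/- Let ξ < 0, μ ∈ ℝ, σ > 0 satisfy μ − (σ/ξ)(Γ(1 − ξ) − 1) > 0. Let Y be a random variable with the GEV distribution G_ξ(·; μ, σ) and let X be a negative random variable with distribution function L_{2,ξ}(·; μ, σ). Then H(Y) < H(X), i.e. the Shannon entropy of the negative log-GEV law strictly exceeds that of the corresponding GEV law. -/

import Mathlib

open MeasureTheory Filter Real Set

/-- The Shannon entropy `H(f) = -∫_{{f > 0}} f x * log (f x) dx` of a density `f`
with respect to Lebesgue measure. -/
noncomputable def shannonEntropy (f : ℝ → ℝ) : ℝ :=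
  -∫ x in {x : ℝ | 0 < f x}, f x * Real.log (f x)

/-- Density of the (power) GEV family with sign `s` (`s = 1` gives the log-GEV
density `l_{1,ξ}` on positive support, `s = -1` the negative log-GEV density
`l_{2,ξ}` on negative support):
`l(x) = (1/(σ|x|)) (1 + s ξ (log|x| - μ)/σ)_+^{-1-1/ξ} exp(-(1 + s ξ (log|x| - μ)/σ)_+^{-1/ξ})`. -/
noncomputable def pgevPdf (s ξ μ σ x : ℝ) : ℝ :=
  if 0 < s * x ∧ 0 < 1 + s * ξ * ((Real.log |x| - μ) / σ) then
    (1 / (σ * |x|)) * (1 + s * ξ * ((Real.log |x| - μ) / σ)) ^ (-1 - 1 / ξ) *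
      Real.exp (-(1 + s * ξ * ((Real.log |x| - μ) / σ)) ^ (-1 / ξ))
  else 0

/-- Density of the GEV distribution `G_ξ(·; μ, σ)`:
`g(x) = (1/σ) (1 + ξ (x - μ)/σ)_+^{-1-1/ξ} exp(-(1 + ξ (x - μ)/σ)_+^{-1/ξ})`. -/
noncomputable def gevPdf (ξ μ σ x : ℝ) : ℝ :=
  if 0 < 1 + (ξ / σ) * (x - μ) then
    (1 / σ) * (1 + (ξ / σ) * (x - μ)) ^ (-1 - 1 / ξ) *
      Real.exp (-(1 + (ξ / σ) * (x - μ)) ^ (-1 / ξ))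
  else 0

section Aux14

variable {ξ μ σ : ℝ}

lemma aux14_psi_deriv (hξ : ξ < 0) {t : ℝ} (ht : t ∈ Ioi (0:ℝ)) :
    HasDerivAt (fun t : ℝ => μ + σ / ξ * (t ^ (-ξ) - 1)) (-σ * t ^ (-ξ - 1)) t := by
  have hξ0 : ξ ≠ 0 := ne_of_lt hξ
  have h := (Real.hasDerivAt_rpow_const (x := t) (p := -ξ)
    (Or.inl (ne_of_gt (show (0:ℝ) < t from ht)))).sub_const 1
  have h2 := (h.const_mul (σ / ξ)).const_add μ
  convert h2 using 1
  · rfl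
  · rfl
  field_simp

lemma aux14_psi_inj (hξ : ξ < 0) (hσ : 0 < σ) :
    InjOn (fun t : ℝ => μ + σ / ξ * (t ^ (-ξ) - 1)) (Ioi 0) := by
  have hD0 : σ / ξ ≠ 0 := (div_neg_of_pos_of_neg hσ hξ).ne
  intro a ha b hb h
  simp only at h
  have h1 : σ / ξ * (a ^ (-ξ) - 1) = σ / ξ * (b ^ (-ξ) - 1) := by linarith
  have h2 : a ^ (-ξ) = b ^ (-ξ) := by
    have := mul_left_cancel₀ hD0 h1; linarith
  have h3 := congrArg (fun y : ℝ => y ^ (-ξ)⁻¹) h2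
  simpa only [Real.rpow_rpow_inv (le_of_lt (show (0:ℝ) < a from ha)) (neg_ne_zero.mpr hξ.ne),
    Real.rpow_rpow_inv (le_of_lt (show (0:ℝ) < b from hb)) (neg_ne_zero.mpr hξ.ne)] using h3

lemma aux14_psi_img (hξ : ξ < 0) (hσ : 0 < σ) :
    (fun t : ℝ => μ + σ / ξ * (t ^ (-ξ) - 1)) '' (Ioi 0) = Iio (μ - σ / ξ) := by
  have hξ0 : ξ ≠ 0 := ne_of_lt hξ
  have hσ0 : σ ≠ 0 := ne_of_gt hσ
  have hD : σ / ξ < 0 := div_neg_of_pos_of_neg hσ hξ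
  ext w
  simp only [mem_image, mem_Ioi, mem_Iio]
  constructor
  · rintro ⟨t, ht, rfl⟩
    nlinarith [Real.rpow_pos_of_pos ht (-ξ)]
  · intro hw
    have hr : 0 < (w - μ + σ / ξ) / (σ / ξ) := div_pos_of_neg_of_neg (by linarith) hD
    refine ⟨((w - μ + σ / ξ) / (σ / ξ)) ^ (-ξ)⁻¹, Real.rpow_pos_of_pos hr _, ?_⟩
    rw [Real.rpow_inv_rpow hr.le (neg_ne_zero.mpr hξ.ne)]
    field_simp
    ring

lemma aux14_gev_supp (hξ : ξ < 0) (hσ : 0 < σ) :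
    {x : ℝ | 0 < gevPdf ξ μ σ x} = Iio (μ - σ / ξ) := by
  have hc : ξ / σ < 0 := div_neg_of_neg_of_pos hξ hσ
  have hξ0 : ξ ≠ 0 := ne_of_lt hξ
  have hσ0 : σ ≠ 0 := ne_of_gt hσ
  have hcD : ξ / σ * (σ / ξ) = 1 := by field_simp
  ext x
  simp only [mem_setOf_eq, mem_Iio, gevPdf]
  constructor
  · intro h
    by_contra hx
    push_neg at hx
    have hcond : ¬ (0 < 1 + ξ / σ * (x - μ)) := by nlinarith
    rw [if_neg hcond] at h
    exact absurd h (lt_irrefl 0)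
  · intro hx
    have hcond : 0 < 1 + ξ / σ * (x - μ) := by nlinarith
    rw [if_pos hcond]
    exact mul_pos (mul_pos (by positivity) (Real.rpow_pos_of_pos hcond _)) (Real.exp_pos _)

lemma aux14_gev_eval (hξ : ξ < 0) (hσ : 0 < σ) {t : ℝ} (ht : 0 < t) :
    gevPdf ξ μ σ (μ + σ / ξ * (t ^ (-ξ) - 1)) = 1 / σ * t ^ (ξ + 1) * Real.exp (-t) := by
  have hξ0 : ξ ≠ 0 := ne_of_lt hξ
  have hσ0 : σ ≠ 0 := ne_of_gt hσ
  have harg : 1 + ξ / σ * (μ + σ / ξ * (t ^ (-ξ) - 1) - μ) = t ^ (-ξ) := by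
    field_simp
    ring
  simp only [gevPdf]
  rw [harg, if_pos (Real.rpow_pos_of_pos ht _)]
  simp only [← Real.rpow_mul ht.le]
  have he1 : -ξ * (-1 - 1 / ξ) = ξ + 1 := by field_simp; ring
  have he2 : -ξ * (-1 / ξ) = 1 := by field_simp
  rw [he1, he2, Real.rpow_one]

lemma aux14_gev (hξ : ξ < 0) (hσ : 0 < σ) :
    ∫ x in {x : ℝ | 0 < gevPdf ξ μ σ x}, gevPdf ξ μ σ x * Real.log (gevPdf ξ μ σ x)
      = ∫ t in Ioi (0:ℝ), Real.exp (-t) * (-Real.log σ + (ξ + 1) * Real.log t - t) := by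
  have hσ0 : σ ≠ 0 := ne_of_gt hσ
  rw [aux14_gev_supp hξ hσ, ← aux14_psi_img hξ hσ,
    integral_image_eq_integral_abs_deriv_smul measurableSet_Ioi
      (fun t ht => (aux14_psi_deriv hξ ht).hasDerivWithinAt) (aux14_psi_inj hξ hσ)]
  refine setIntegral_congr_fun measurableSet_Ioi fun t ht => ?_
  have ht' : (0:ℝ) < t := ht
  rw [smul_eq_mul, aux14_gev_eval hξ hσ ht']
  have habs : |(-σ * t ^ (-ξ - 1))| = σ * t ^ (-ξ - 1) := by
    rw [abs_of_neg (mul_neg_of_neg_of_pos (neg_lt_zero.mpr hσ) (Real.rpow_pos_of_pos ht' _))]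
    ring
  have hlog : Real.log (1 / σ * t ^ (ξ + 1) * Real.exp (-t))
      = -Real.log σ + (ξ + 1) * Real.log t - t := by
    rw [Real.log_mul (by positivity) (Real.exp_ne_zero _),
      Real.log_mul (by positivity) (Real.rpow_pos_of_pos ht' _).ne',
      Real.log_exp, Real.log_rpow ht', one_div, Real.log_inv]
    ring
  rw [habs, hlog]
  have htt : t ^ (-ξ - 1) * t ^ (ξ + 1) = 1 := by
    rw [← Real.rpow_add ht']; norm_num
  have hss : σ * (1 / σ) = 1 := by field_simp
  calc σ * t ^ (-ξ - 1) * (1 / σ * t ^ (ξ + 1) * Real.exp (-t) *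
        (-Real.log σ + (ξ + 1) * Real.log t - t))
      = (t ^ (-ξ - 1) * t ^ (ξ + 1)) * (σ * (1 / σ)) *
          (Real.exp (-t) * (-Real.log σ + (ξ + 1) * Real.log t - t)) := by ring
    _ = Real.exp (-t) * (-Real.log σ + (ξ + 1) * Real.log t - t) := by
        rw [htt, hss]; ring

end Aux14

section Aux14b

variable {ξ μ σ : ℝ}

lemma aux14_cond_iff (hξ : ξ < 0) (hσ : 0 < σ) (L : ℝ) :
    0 < 1 + (-1) * ξ * ((L - μ) / σ) ↔ μ + σ / ξ < L := by
  rw [show 1 + (-1) * ξ * ((L - μ) / σ) = 1 - (ξ * (L - μ)) / σ by ring, sub_pos,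
    div_lt_one hσ]
  constructor
  · intro h
    have h2 : σ / ξ < L - μ := (div_lt_iff_of_neg hξ).mpr (by rw [mul_comm]; linarith)
    linarith
  · intro h
    have h2 : σ / ξ < L - μ := by linarith
    have h3 := (div_lt_iff_of_neg hξ).mp h2
    linarith [h3, mul_comm (L - μ) ξ]

lemma aux14_rho_deriv (hξ : ξ < 0) {t : ℝ} (ht : t ∈ Ioi (0:ℝ)) :
    HasDerivAt (fun t : ℝ => -Real.exp (μ + σ / ξ - σ / ξ * t ^ (-ξ)))
      (-σ * t ^ (-ξ - 1) * Real.exp (μ + σ / ξ - σ / ξ * t ^ (-ξ))) t := by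
  have hξ0 : ξ ≠ 0 := ne_of_lt hξ
  have h0 : HasDerivAt (fun t : ℝ => μ + σ / ξ - σ / ξ * t ^ (-ξ))
      (-(σ / ξ * (-ξ * t ^ (-ξ - 1)))) t :=
    ((Real.hasDerivAt_rpow_const (x := t) (p := -ξ)
      (Or.inl (ne_of_gt (show (0:ℝ) < t from ht)))).const_mul (σ / ξ)).const_sub (μ + σ / ξ)
  have h1 := h0.exp.neg
  convert h1 using 1
  · rfl
  · rfl
  · rfl
  field_simp

lemma aux14_rho_inj (hξ : ξ < 0) (hσ : 0 < σ) :
    InjOn (fun t : ℝ => -Real.exp (μ + σ / ξ - σ / ξ * t ^ (-ξ))) (Ioi 0) := by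
  have hD0 : σ / ξ ≠ 0 := (div_neg_of_pos_of_neg hσ hξ).ne
  intro a ha b hb h
  simp only [neg_inj, Real.exp_eq_exp] at h
  have h1 : σ / ξ * a ^ (-ξ) = σ / ξ * b ^ (-ξ) := by linarith
  have h2 : a ^ (-ξ) = b ^ (-ξ) := mul_left_cancel₀ hD0 h1
  have h3 := congrArg (fun y : ℝ => y ^ (-ξ)⁻¹) h2
  simpa only [Real.rpow_rpow_inv (le_of_lt (show (0:ℝ) < a from ha)) (neg_ne_zero.mpr hξ.ne),
    Real.rpow_rpow_inv (le_of_lt (show (0:ℝ) < b from hb)) (neg_ne_zero.mpr hξ.ne)] using h3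

lemma aux14_rho_img (hξ : ξ < 0) (hσ : 0 < σ) :
    (fun t : ℝ => -Real.exp (μ + σ / ξ - σ / ξ * t ^ (-ξ))) '' (Ioi 0)
      = Iio (-Real.exp (μ + σ / ξ)) := by
  have hξ0 : ξ ≠ 0 := ne_of_lt hξ
  have hσ0 : σ ≠ 0 := ne_of_gt hσ
  have hD : σ / ξ < 0 := div_neg_of_pos_of_neg hσ hξ
  ext x
  simp only [mem_image, mem_Ioi, mem_Iio]
  constructor
  · rintro ⟨t, ht, rfl⟩
    have h1 : μ + σ / ξ < μ + σ / ξ - σ / ξ * t ^ (-ξ) := by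
      nlinarith [Real.rpow_pos_of_pos ht (-ξ)]
    have := Real.exp_lt_exp.mpr h1
    linarith
  · intro hx
    have hex := Real.exp_pos (μ + σ / ξ)
    have hnx : (0:ℝ) < -x := by linarith
    have hL : μ + σ / ξ < Real.log (-x) := (Real.lt_log_iff_exp_lt hnx).mpr (by linarith)
    have hr : 0 < (μ + σ / ξ - Real.log (-x)) / (σ / ξ) :=
      div_pos_of_neg_of_neg (by linarith) hD
    refine ⟨((μ + σ / ξ - Real.log (-x)) / (σ / ξ)) ^ (-ξ)⁻¹, Real.rpow_pos_of_pos hr _, ?_⟩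
    rw [Real.rpow_inv_rpow hr.le (neg_ne_zero.mpr hξ.ne)]
    have : μ + σ / ξ - σ / ξ * ((μ + σ / ξ - Real.log (-x)) / (σ / ξ)) = Real.log (-x) := by
      field_simp
      ring
    rw [this, Real.exp_log hnx, neg_neg]

lemma aux14_pgev_supp (hξ : ξ < 0) (hσ : 0 < σ) :
    {x : ℝ | 0 < pgevPdf (-1) ξ μ σ x} = Iio (-Real.exp (μ + σ / ξ)) := by
  have hξ0 : ξ ≠ 0 := ne_of_lt hξ
  have hσ0 : σ ≠ 0 := ne_of_gt hσ
  have hc : ξ / σ < 0 := div_neg_of_neg_of_pos hξ hσ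
  have hcD : ξ / σ * (σ / ξ) = 1 := by field_simp
  ext x
  simp only [mem_setOf_eq, mem_Iio, pgevPdf]
  constructor
  · intro h
    by_cases hcond : (0 < (-1:ℝ) * x ∧ 0 < 1 + (-1) * ξ * ((Real.log |x| - μ) / σ))
    swap
    · rw [if_neg hcond] at h; exact absurd h (lt_irrefl 0)
    obtain ⟨hc1, hc2⟩ := hcond
    have hx : x < 0 := by linarith
    rw [abs_of_neg hx] at hc2
    have hL : μ + σ / ξ < Real.log (-x) := (aux14_cond_iff hξ hσ _).mp hc2
    have := (Real.lt_log_iff_exp_lt (by linarith : (0:ℝ) < -x)).mp hL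
    linarith
  · intro hx
    have hex := Real.exp_pos (μ + σ / ξ)
    have hx0 : x < 0 := by linarith
    have hnx : (0:ℝ) < -x := by linarith
    have hL : μ + σ / ξ < Real.log (-x) := (Real.lt_log_iff_exp_lt hnx).mpr (by linarith)
    have hc2 : 0 < 1 + (-1) * ξ * ((Real.log |x| - μ) / σ) := by
      rw [abs_of_neg hx0]
      exact (aux14_cond_iff hξ hσ _).mpr hL
    rw [if_pos ⟨by linarith, hc2⟩]
    refine mul_pos (mul_pos ?_ (Real.rpow_pos_of_pos hc2 _)) (Real.exp_pos _)
    rw [abs_of_neg hx0]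
    positivity

lemma aux14_pgev_eval (hξ : ξ < 0) (hσ : 0 < σ) {t : ℝ} (ht : 0 < t) :
    pgevPdf (-1) ξ μ σ (-Real.exp (μ + σ / ξ - σ / ξ * t ^ (-ξ)))
      = 1 / (σ * Real.exp (μ + σ / ξ - σ / ξ * t ^ (-ξ))) * t ^ (ξ + 1) * Real.exp (-t) := by
  have hξ0 : ξ ≠ 0 := ne_of_lt hξ
  have hσ0 : σ ≠ 0 := ne_of_gt hσ
  have hE : |(-Real.exp (μ + σ / ξ - σ / ξ * t ^ (-ξ)))|
      = Real.exp (μ + σ / ξ - σ / ξ * t ^ (-ξ)) := by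
    rw [abs_neg, abs_of_pos (Real.exp_pos _)]
  simp only [pgevPdf]
  rw [hE]
  have hc2 : 1 + (-1) * ξ * ((Real.log (Real.exp (μ + σ / ξ - σ / ξ * t ^ (-ξ))) - μ) / σ)
      = t ^ (-ξ) := by
    rw [Real.log_exp]
    field_simp
    ring
  rw [hc2]
  have hc1 : 0 < (-1 : ℝ) * (-Real.exp (μ + σ / ξ - σ / ξ * t ^ (-ξ))) := by
    have := Real.exp_pos (μ + σ / ξ - σ / ξ * t ^ (-ξ)); linarith
  rw [if_pos ⟨hc1, Real.rpow_pos_of_pos ht _⟩]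
  simp only [← Real.rpow_mul ht.le]
  have he1 : -ξ * (-1 - 1 / ξ) = ξ + 1 := by field_simp; ring
  have he2 : -ξ * (-1 / ξ) = 1 := by field_simp
  rw [he1, he2, Real.rpow_one]

lemma aux14_pgev (hξ : ξ < 0) (hσ : 0 < σ) :
    ∫ x in {x : ℝ | 0 < pgevPdf (-1) ξ μ σ x},
        pgevPdf (-1) ξ μ σ x * Real.log (pgevPdf (-1) ξ μ σ x)
      = ∫ t in Ioi (0:ℝ), (Real.exp (-t) * (-Real.log σ + (ξ + 1) * Real.log t - t)
          + Real.exp (-t) * (-μ + σ / ξ * (t ^ (-ξ) - 1))) := by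
  have hξ0 : ξ ≠ 0 := ne_of_lt hξ
  have hσ0 : σ ≠ 0 := ne_of_gt hσ
  rw [aux14_pgev_supp hξ hσ, ← aux14_rho_img hξ hσ,
    integral_image_eq_integral_abs_deriv_smul measurableSet_Ioi
      (fun t ht => (aux14_rho_deriv hξ ht).hasDerivWithinAt) (aux14_rho_inj hξ hσ)]
  refine setIntegral_congr_fun measurableSet_Ioi fun t ht => ?_
  have ht' : (0:ℝ) < t := ht
  have hEpos := Real.exp_pos (μ + σ / ξ - σ / ξ * t ^ (-ξ))
  rw [smul_eq_mul, aux14_pgev_eval hξ hσ ht']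
  have habs : |(-σ * t ^ (-ξ - 1) * Real.exp (μ + σ / ξ - σ / ξ * t ^ (-ξ)))|
      = σ * t ^ (-ξ - 1) * Real.exp (μ + σ / ξ - σ / ξ * t ^ (-ξ)) := by
    rw [abs_of_neg (mul_neg_of_neg_of_pos
      (mul_neg_of_neg_of_pos (neg_lt_zero.mpr hσ) (Real.rpow_pos_of_pos ht' _)) hEpos)]
    ring
  have hlog : Real.log (1 / (σ * Real.exp (μ + σ / ξ - σ / ξ * t ^ (-ξ))) * t ^ (ξ + 1)
        * Real.exp (-t))
      = -(Real.log σ + (μ + σ / ξ - σ / ξ * t ^ (-ξ))) + (ξ + 1) * Real.log t - t := by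
    rw [Real.log_mul (by positivity) (Real.exp_ne_zero _),
      Real.log_mul (by positivity) (Real.rpow_pos_of_pos ht' _).ne',
      Real.log_exp, Real.log_rpow ht', one_div, Real.log_inv,
      Real.log_mul hσ0 (Real.exp_ne_zero _), Real.log_exp]
    ring
  rw [habs, hlog]
  have htt : t ^ (-ξ - 1) * t ^ (ξ + 1) = 1 := by
    rw [← Real.rpow_add ht']; norm_num
  have hss : (σ * Real.exp (μ + σ / ξ - σ / ξ * t ^ (-ξ)))
      * (1 / (σ * Real.exp (μ + σ / ξ - σ / ξ * t ^ (-ξ)))) = 1 := by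
    field_simp
  calc σ * t ^ (-ξ - 1) * Real.exp (μ + σ / ξ - σ / ξ * t ^ (-ξ)) *
        (1 / (σ * Real.exp (μ + σ / ξ - σ / ξ * t ^ (-ξ))) * t ^ (ξ + 1) * Real.exp (-t) *
          (-(Real.log σ + (μ + σ / ξ - σ / ξ * t ^ (-ξ))) + (ξ + 1) * Real.log t - t))
      = (t ^ (-ξ - 1) * t ^ (ξ + 1)) * ((σ * Real.exp (μ + σ / ξ - σ / ξ * t ^ (-ξ)))
          * (1 / (σ * Real.exp (μ + σ / ξ - σ / ξ * t ^ (-ξ))))) *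
          (Real.exp (-t) *
            (-(Real.log σ + (μ + σ / ξ - σ / ξ * t ^ (-ξ))) + (ξ + 1) * Real.log t - t)) := by
        ring
    _ = Real.exp (-t) *
          (-(Real.log σ + (μ + σ / ξ - σ / ξ * t ^ (-ξ))) + (ξ + 1) * Real.log t - t) := by
        rw [htt, hss]; ring
    _ = Real.exp (-t) * (-Real.log σ + (ξ + 1) * Real.log t - t)
          + Real.exp (-t) * (-μ + σ / ξ * (t ^ (-ξ) - 1)) := by ring

end Aux14b

section Aux14c

variable {ξ μ σ : ℝ}

lemma aux14_int_exp : IntegrableOn (fun t : ℝ => Real.exp (-t)) (Ioi 0) := by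
  have := exp_neg_integrableOn_Ioi 0 (zero_lt_one (α := ℝ))
  simpa using this

lemma aux14_int_log : IntegrableOn (fun t : ℝ => Real.exp (-t) * Real.log t) (Ioi 0) := by
  have hg : IntegrableOn (fun t : ℝ => 2 * (Real.exp (-t) * t ^ ((3:ℝ)/2 - 1))
      + 2 * (Real.exp (-t) * t ^ ((1:ℝ)/2 - 1))) (Ioi 0) :=
    ((Real.GammaIntegral_convergent (by norm_num : (0:ℝ) < 3/2)).const_mul 2).add
      ((Real.GammaIntegral_convergent (by norm_num : (0:ℝ) < 1/2)).const_mul 2)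
  refine Integrable.mono' hg ?_ ?_
  · exact ((Real.measurable_exp.comp measurable_neg).mul Real.measurable_log).aestronglyMeasurable
  · rw [ae_restrict_iff' measurableSet_Ioi]
    filter_upwards with t ht
    have ht' : (0:ℝ) < t := ht
    have h3 : (0:ℝ) ≤ t ^ ((3:ℝ)/2 - 1) := Real.rpow_nonneg ht'.le _
    have h4 : (0:ℝ) ≤ t ^ ((1:ℝ)/2 - 1) := Real.rpow_nonneg ht'.le _
    have h1 : Real.log t ≤ 2 * t ^ ((3:ℝ)/2 - 1) := by
      have := Real.log_le_sub_one_of_pos (Real.rpow_pos_of_pos ht' ((3:ℝ)/2 - 1))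
      rw [Real.log_rpow ht'] at this
      linarith
    have h2 : -Real.log t ≤ 2 * t ^ ((1:ℝ)/2 - 1) := by
      have := Real.log_le_sub_one_of_pos (Real.rpow_pos_of_pos ht' ((1:ℝ)/2 - 1))
      rw [Real.log_rpow ht'] at this
      linarith
    have hlb : |Real.log t| ≤ 2 * t ^ ((3:ℝ)/2 - 1) + 2 * t ^ ((1:ℝ)/2 - 1) := by
      rw [abs_le]; constructor <;> linarith
    have hE := Real.exp_pos (-t)
    rw [Real.norm_eq_abs, abs_mul, abs_of_pos hE]
    calc Real.exp (-t) * |Real.log t|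
        ≤ Real.exp (-t) * (2 * t ^ ((3:ℝ)/2 - 1) + 2 * t ^ ((1:ℝ)/2 - 1)) :=
          mul_le_mul_of_nonneg_left hlb hE.le
      _ = 2 * (Real.exp (-t) * t ^ ((3:ℝ)/2 - 1)) + 2 * (Real.exp (-t) * t ^ ((1:ℝ)/2 - 1)) := by
          ring

lemma aux14_int_id : IntegrableOn (fun t : ℝ => Real.exp (-t) * t) (Ioi 0) := by
  have := Real.GammaIntegral_convergent (show (0:ℝ) < 2 by norm_num)
  have h21 : (2:ℝ) - 1 = 1 := by norm_num
  rw [h21] at this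
  simpa [Real.rpow_one] using this

lemma aux14_int_P :
    IntegrableOn (fun t : ℝ => Real.exp (-t) * (-Real.log σ + (ξ + 1) * Real.log t - t))
      (Ioi 0) := by
  have h := ((aux14_int_exp.const_mul (-Real.log σ)).add
    (aux14_int_log.const_mul (ξ + 1))).sub aux14_int_id
  refine h.congr (Filter.Eventually.of_forall fun t => ?_)
  simp only [Pi.add_apply, Pi.sub_apply]
  ring

lemma aux14_int_G (hξ : ξ < 0) :
    IntegrableOn (fun t : ℝ => Real.exp (-t) * t ^ (-ξ)) (Ioi 0) := by
  have h := Real.GammaIntegral_convergent (show (0:ℝ) < 1 - ξ by linarith)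
  simpa [show (1:ℝ) - ξ - 1 = -ξ by ring] using h

lemma aux14_int_Q (hξ : ξ < 0) :
    IntegrableOn (fun t : ℝ => Real.exp (-t) * (-μ + σ / ξ * (t ^ (-ξ) - 1))) (Ioi 0) := by
  have h := (aux14_int_exp.const_mul (-μ - σ / ξ)).add ((aux14_int_G hξ).const_mul (σ / ξ))
  refine h.congr (Filter.Eventually.of_forall fun t => ?_)
  simp only [Pi.add_apply]
  ring

lemma aux14_Q_val (hξ : ξ < 0) :
    ∫ t in Ioi (0:ℝ), Real.exp (-t) * (-μ + σ / ξ * (t ^ (-ξ) - 1))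
      = -(μ - σ / ξ * (Real.Gamma (1 - ξ) - 1)) := by
  have hGval : ∫ t in Ioi (0:ℝ), Real.exp (-t) * t ^ (-ξ) = Real.Gamma (1 - ξ) := by
    rw [Real.Gamma_eq_integral (show (0:ℝ) < 1 - ξ by linarith)]
    simp only [show (1:ℝ) - ξ - 1 = -ξ by ring]
  rw [setIntegral_congr_fun (g := fun t : ℝ => (-μ - σ / ξ) * Real.exp (-t)
      + σ / ξ * (Real.exp (-t) * t ^ (-ξ))) measurableSet_Ioi (fun t _ => by ring),
    integral_add (aux14_int_exp.const_mul _) ((aux14_int_G hξ).const_mul _),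
    integral_const_mul, integral_const_mul, integral_exp_neg_Ioi_zero, hGval]
  ring

end Aux14c


/-- Let `ξ < 0`, `σ > 0` with `μ - (σ/ξ)(Γ(1-ξ) - 1) > 0`. If `Y`
has the GEV distribution `G_ξ(·; μ, σ)` (density `gevPdf ξ μ σ`) and `X` is a
negative random variable with distribution function `L_{2,ξ}(·; μ, σ)`
(density `pgevPdf (-1) ξ μ σ`), then `H(Y) < H(X)`. -/
theorem stmt_14 {Ω : Type*} [MeasurableSpace Ω] (P : Measure Ω) [IsProbabilityMeasure P]
    (ξ μ σ : ℝ) (hξ : ξ < 0) (hσ : 0 < σ)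
    (hpos : 0 < μ - (σ / ξ) * (Real.Gamma (1 - ξ) - 1))
    (Y X : Ω → ℝ) (hYm : Measurable Y) (hXm : Measurable X) (hXneg : ∀ ω, X ω < 0)
    (hYd : Measure.map Y P = MeasureTheory.Measure.withDensity volume
      (fun x => ENNReal.ofReal (gevPdf ξ μ σ x)))
    (hXd : Measure.map X P = MeasureTheory.Measure.withDensity volume
      (fun x => ENNReal.ofReal (pgevPdf (-1) ξ μ σ x))) :
    shannonEntropy (gevPdf ξ μ σ) < shannonEntropy (pgevPdf (-1) ξ μ σ) := by
  have h1 := aux14_gev (μ := μ) hξ hσ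
  have h2 := aux14_pgev (μ := μ) hξ hσ
  have hQval := aux14_Q_val (μ := μ) (σ := σ) hξ
  rw [shannonEntropy, shannonEntropy, h1, h2,
    integral_add (aux14_int_P (ξ := ξ) (σ := σ)) (aux14_int_Q (μ := μ) (σ := σ) hξ), hQval]
  linarith
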